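/- Let ρ = 5/32 and μ = 59, and let F be the corresponding symmetric Kopel map with Jacobian matrix M(x,y). Then there exists a point (x₀,y₀) ∈ ℝ² with (x₀,y₀) ≠ (0,0) and x₀² + y₀² ≤ 1/25 such that F(F(x₀,y₀)) = (0,0), the determinant of M at the point F(x₀,y₀) is nonzero, and the determinant of M at (0,0) is nonzero. -/

import Mathlib

open Matrix

/-- For `ρ = 5/32`, `μ = 59`: there is a nonzero point `(x₀,y₀)` in the closed disk
of radius `1/5` about the origin with `F(F(x₀,y₀)) = (0,0)`, such that the Jacobian
determinant of the symmetric Kopel map is nonzero at `F(x₀,y₀)` and at `(0,0)`. -/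
theorem symmetric_kopel_snapback_point
    (F : ℝ × ℝ → ℝ × ℝ)
    (hF : ∀ p : ℝ × ℝ, F p =
      (27 / 32 * p.1 + 295 / 32 * p.2 * (1 - p.2),
       27 / 32 * p.2 + 295 / 32 * p.1 * (1 - p.1)))
    (M : ℝ × ℝ → Matrix (Fin 2) (Fin 2) ℝ)
    (hM : ∀ p : ℝ × ℝ, M p =
      !![(27 : ℝ) / 32, 295 / 32 * (1 - 2 * p.2);
         295 / 32 * (1 - 2 * p.1), 27 / 32]) :
    ∃ p : ℝ × ℝ, p ≠ (0, 0) ∧ p.1 ^ 2 + p.2 ^ 2 ≤ 1 / 25 ∧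
      F (F p) = (0, 0) ∧ (M (F p)).det ≠ 0 ∧ (M (0, 0)).det ≠ 0 := by
  set s : ℝ := Real.sqrt 54362777 with hs
  have hs2 : s ^ 2 = 54362777 := Real.sq_sqrt (by norm_num)
  have hslb : (7373 : ℝ) ≤ s := by
    rw [hs, show (7373 : ℝ) = Real.sqrt (7373 ^ 2) by
      rw [Real.sqrt_sq] <;> norm_num]
    exact Real.sqrt_le_sqrt (by norm_num)
  have hsub : s < 9499 := by
    nlinarith [hs2]
  set x : ℝ := (9499 - s) / 17405 with hx
  have hxpos : 0 < x := by
    rw [hx]; apply div_pos <;> [linarith; norm_num]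
  refine ⟨(x, x), ?_, ?_, ?_, ?_, ?_⟩
  · exact fun h => hxpos.ne' (congrArg Prod.fst h)
  · simp only
    have hxle : x ≤ 2126 / 17405 := by
      rw [hx]
      apply div_le_div_of_nonneg_right _ (by norm_num)
      linarith
    nlinarith [hxpos]
  · have h1 : F (x, x) = (322 / 295, 322 / 295) := by
      rw [hF]
      have key : 27 / 32 * x + 295 / 32 * x * (1 - x) = 322 / 295 := by
        rw [hx]
        field_simp
        linear_combination (295 / 17405 - 2859697196001 / 59 + 48469356975 : ℝ) * hs2
      simp [key]
    rw [h1, hF]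
    norm_num
  · have h1 : F (x, x) = (322 / 295, 322 / 295) := by
      rw [hF]
      have key : 27 / 32 * x + 295 / 32 * x * (1 - x) = 322 / 295 := by
        rw [hx]
        field_simp
        linear_combination (295 / 17405 - 2859697196001 / 59 + 48469356975 : ℝ) * hs2
      simp [key]
    rw [h1, hM]
    simp [Matrix.det_fin_two_of]
    norm_num
  · rw [hM]
    simp [Matrix.det_fin_two_of]
    norm_num
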